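/- Let Ψ: ℝⁿ → ℂ be continuous with Re Ψ ≥ 0, suppose there exist M > 0 and β ∈ (0,2] such that Re Ψ(ξ) ≥ ‖ξ‖^β whenever ‖ξ‖ > M, and suppose sup_{ξ ∈ ℝⁿ} |Ψ(ξ)|/(1 + ‖ξ‖²) < ∞. Fix θ ∈ (0,1] and T > 0, and let p_t(x) := (2π)^{−n} ∫_{ℝⁿ} e^{−tΨ(ξ)} e^{−i⟨x,ξ⟩} dξ. Then there is a constant C > 0 such that |p_{t+ε}(x) − p_t(x)| ≤ C ε^θ t^{−(2θ+n)/β} for all t ∈ (0,T], all ε > 0 and all x ∈ ℝⁿ. -/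

import Mathlib

open MeasureTheory Complex Set

open scoped NNReal

noncomputable section

lemma aux1 (β q : ℝ) (hβ : 0 < β) (hq : 0 ≤ q) (k : ℕ) :
    ∃ c : ℝ, 0 < c ∧ ∀ s : ℝ, 0 ≤ s →
      Real.exp (-(s ^ β)) * (1 + s ^ q) ≤ c * (1 + s) ^ (-((k : ℝ) + 1)) := by
  set m := ⌈(q + k + 1) / β⌉₊ with hm
  have hfac : (1 : ℝ) ≤ m.factorial := by exact_mod_cast m.factorial_pos
  refine ⟨m.factorial * (2 * 2 ^ ((k : ℝ) + 1)), by positivity, fun s hs => ?_⟩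
  have h1s : (0 : ℝ) < 1 + s := by linarith
  rw [Real.rpow_neg h1s.le, mul_comm (_ * _ : ℝ), inv_mul_eq_div, le_div_iff₀ (by positivity)]
  rcases le_total s 1 with h | h
  · have e1 : Real.exp (-(s ^ β)) ≤ 1 :=
      Real.exp_le_one_iff.2 (neg_nonpos.2 (Real.rpow_nonneg hs β))
    have e2 : 1 + s ^ q ≤ 2 := by
      have := Real.rpow_le_one hs h hq; linarith
    have e3 : (1 + s) ^ ((k : ℝ) + 1) ≤ 2 ^ ((k : ℝ) + 1) :=
      Real.rpow_le_rpow (by linarith) (by linarith) (by positivity)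
    calc Real.exp (-(s ^ β)) * (1 + s ^ q) * (1 + s) ^ ((k : ℝ) + 1)
        ≤ 1 * 2 * (2 ^ ((k : ℝ) + 1)) := by
          gcongr <;> positivity
      _ ≤ m.factorial * (2 * 2 ^ ((k : ℝ) + 1)) := by nlinarith [Real.rpow_nonneg (by norm_num : (0:ℝ) ≤ 2) ((k:ℝ)+1)]
  · have hsp : (0 : ℝ) < s := lt_of_lt_of_le one_pos h
    have hx : (0 : ℝ) < s ^ β := Real.rpow_pos_of_pos hsp _
    have hpow : s ^ (β * (m : ℝ)) = (s ^ β) ^ m := by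
      rw [Real.rpow_mul hs, Real.rpow_natCast]
    have e1 : Real.exp (-(s ^ β)) ≤ m.factorial / s ^ (β * (m : ℝ)) := by
      rw [Real.exp_neg, hpow]
      calc (Real.exp (s ^ β))⁻¹ ≤ ((s ^ β) ^ m / m.factorial)⁻¹ :=
            inv_anti₀ (by positivity) (Real.pow_div_factorial_le_exp _ hx.le m)
        _ = m.factorial / (s ^ β) ^ m := inv_div _ _
    have e2 : 1 + s ^ q ≤ 2 * s ^ q := by
      have := Real.one_le_rpow h hq; linarith
    have e3 : (1 + s) ^ ((k : ℝ) + 1) ≤ 2 ^ ((k : ℝ) + 1) * s ^ ((k : ℝ) + 1) := by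
      rw [← Real.mul_rpow (by norm_num) hs]
      · exact Real.rpow_le_rpow h1s.le (by linarith) (by positivity)
    have hexp : q + ((k : ℝ) + 1) - β * m ≤ 0 := by
      have h1 : (q + k + 1) / β ≤ m := Nat.le_ceil _
      have := (div_le_iff₀ hβ).1 h1
      linarith
    calc Real.exp (-(s ^ β)) * (1 + s ^ q) * (1 + s) ^ ((k : ℝ) + 1)
        ≤ (m.factorial / s ^ (β * (m : ℝ))) * (2 * s ^ q) *
            (2 ^ ((k : ℝ) + 1) * s ^ ((k : ℝ) + 1)) := by
          gcongr <;> positivity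
      _ = m.factorial * (2 * 2 ^ ((k : ℝ) + 1)) * (s ^ q * s ^ ((k : ℝ) + 1) / s ^ (β * (m : ℝ))) := by
          ring
      _ ≤ m.factorial * (2 * 2 ^ ((k : ℝ) + 1)) * 1 := by
          have h1 : s ^ q * s ^ ((k : ℝ) + 1) / s ^ (β * (m : ℝ)) ≤ 1 := by
            rw [← Real.rpow_add hsp, ← Real.rpow_sub hsp]
            exact Real.rpow_le_one_of_one_le_of_nonpos h hexp
          gcongr <;> positivity
      _ = m.factorial * (2 * 2 ^ ((k : ℝ) + 1)) := by ring

lemma contaux (n : ℕ) (β q : ℝ) (hβ : 0 ≤ β) (hq : 0 ≤ q) (a : ℝ) :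
    Continuous (fun ξ : EuclideanSpace ℝ (Fin n) =>
      Real.exp (-(a * ‖ξ‖ ^ β)) * (1 + ‖ξ‖ ^ q)) := by
  have c1 : Continuous fun ξ : EuclideanSpace ℝ (Fin n) => ‖ξ‖ ^ β :=
    continuous_norm.rpow_const (fun x => Or.inr hβ)
  have c2 : Continuous fun ξ : EuclideanSpace ℝ (Fin n) => ‖ξ‖ ^ q :=
    continuous_norm.rpow_const (fun x => Or.inr hq)
  exact (Real.continuous_exp.comp ((continuous_const.mul c1).neg)).mul
    (continuous_const.add c2)

lemma aux2 (n : ℕ) (β q : ℝ) (hβ : 0 < β) (hq : 0 ≤ q) :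
    Integrable (fun ξ : EuclideanSpace ℝ (Fin n) =>
      Real.exp (-(‖ξ‖ ^ β)) * (1 + ‖ξ‖ ^ q)) := by
  obtain ⟨c, hc, hb⟩ := aux1 β q hβ hq n
  have hfr : ((Module.finrank ℝ (EuclideanSpace ℝ (Fin n)) : ℝ)) < (n : ℝ) + 1 := by
    rw [finrank_euclideanSpace_fin]; linarith
  have hint : Integrable (fun ξ : EuclideanSpace ℝ (Fin n) =>
      c * (1 + ‖ξ‖) ^ (-((n : ℝ) + 1))) := (integrable_one_add_norm hfr).const_mul c
  refine hint.mono' ?_ ?_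
  · have := contaux n β q hβ.le hq 1
    simpa using this.aestronglyMeasurable
  · filter_upwards with ξ
    rw [Real.norm_of_nonneg (by positivity)]
    exact hb ‖ξ‖ (norm_nonneg _)

lemma aux3 (n : ℕ) (β θ T : ℝ) (hβ : 0 < β) (hθ : 0 < θ) (hT : 0 < T) :
    ∃ K : ℝ, 0 < K ∧ ∀ t ∈ Set.Ioc (0 : ℝ) T,
      Integrable (fun ξ : EuclideanSpace ℝ (Fin n) =>
        Real.exp (-(t * ‖ξ‖ ^ β)) * (1 + ‖ξ‖ ^ (2 * θ))) ∧
      ∫ ξ : EuclideanSpace ℝ (Fin n),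
          Real.exp (-(t * ‖ξ‖ ^ β)) * (1 + ‖ξ‖ ^ (2 * θ)) ≤
        K * t ^ (-((2 * θ + n) / β)) := by
  set E := EuclideanSpace ℝ (Fin n)
  set g : E → ℝ := fun ξ => Real.exp (-(‖ξ‖ ^ β)) * (1 + ‖ξ‖ ^ (2 * θ)) with hgdef
  have hg : Integrable g := aux2 n β (2 * θ) hβ (by positivity)
  have hgnn : 0 ≤ ∫ ξ, g ξ := integral_nonneg fun ξ => by positivity
  have hT1 : (1 : ℝ) ≤ max T 1 := le_max_right _ _
  refine ⟨(max T 1) ^ (2 * θ / β) * ((∫ ξ, g ξ) + 1), by positivity, fun t ht => ?_⟩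
  obtain ⟨ht0, htT⟩ := ht
  set f : E → ℝ := fun ξ => Real.exp (-(t * ‖ξ‖ ^ β)) * (1 + ‖ξ‖ ^ (2 * θ)) with hfdef
  set R : ℝ := t ^ (-β⁻¹) with hRdef
  have hR : 0 < R := Real.rpow_pos_of_pos ht0 _
  set A : ℝ := t ^ (-(2 * θ / β)) with hAdef
  have hA : 0 < A := Real.rpow_pos_of_pos ht0 _
  have hkey : ∀ η : E, f (R • η) =
      Real.exp (-(‖η‖ ^ β)) * (1 + A * ‖η‖ ^ (2 * θ)) := by
    intro η
    have hnorm : ‖R • η‖ = R * ‖η‖ := by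
      rw [norm_smul, Real.norm_eq_abs, abs_of_pos hR]
    have h1 : t * ‖R • η‖ ^ β = ‖η‖ ^ β := by
      rw [hnorm, Real.mul_rpow hR.le (norm_nonneg _), hRdef,
        ← Real.rpow_mul ht0.le]
      rw [show -β⁻¹ * β = -1 by field_simp, Real.rpow_neg_one]
      field_simp
    have h2 : ‖R • η‖ ^ (2 * θ) = A * ‖η‖ ^ (2 * θ) := by
      rw [hnorm, Real.mul_rpow hR.le (norm_nonneg _), hRdef,
        ← Real.rpow_mul ht0.le, hAdef]
      congr 2
      field_simp
    simp only [hfdef, h1, h2]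
  -- integrability of the rescaled function
  have hmax : 0 < max 1 A := lt_max_of_lt_left one_pos
  have hptw : ∀ η : E, Real.exp (-(‖η‖ ^ β)) * (1 + A * ‖η‖ ^ (2 * θ)) ≤ max 1 A * g η := by
    intro η
    have h1 : 1 + A * ‖η‖ ^ (2 * θ) ≤ max 1 A * (1 + ‖η‖ ^ (2 * θ)) := by
      have e1 : (1 : ℝ) ≤ max 1 A := le_max_left _ _
      have e2 : A ≤ max 1 A := le_max_right _ _
      have e3 : (0:ℝ) ≤ ‖η‖ ^ (2 * θ) := Real.rpow_nonneg (norm_nonneg _) _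
      nlinarith
    calc Real.exp (-(‖η‖ ^ β)) * (1 + A * ‖η‖ ^ (2 * θ))
        ≤ Real.exp (-(‖η‖ ^ β)) * (max 1 A * (1 + ‖η‖ ^ (2 * θ))) := by
          exact mul_le_mul_of_nonneg_left h1 (Real.exp_pos _).le
      _ = max 1 A * g η := by rw [hgdef]; ring
  have hRcont : Continuous fun η : E => Real.exp (-(‖η‖ ^ β)) * (1 + A * ‖η‖ ^ (2 * θ)) := by
    have c1 : Continuous fun ξ : E => ‖ξ‖ ^ β :=
      continuous_norm.rpow_const (fun x => Or.inr hβ.le)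
    have c2 : Continuous fun ξ : E => ‖ξ‖ ^ (2 * θ) :=
      continuous_norm.rpow_const (fun x => Or.inr (by positivity))
    exact (Real.continuous_exp.comp c1.neg).mul
      (continuous_const.add (continuous_const.mul c2))
  have hfR_int : Integrable (fun η : E => f (R • η)) := by
    simp only [hkey]
    refine (hg.const_mul (max 1 A)).mono' hRcont.aestronglyMeasurable ?_
    filter_upwards with η
    rw [Real.norm_of_nonneg (by positivity)]
    exact hptw η
  have hf_int : Integrable f := (integrable_comp_smul_iff volume f (ne_of_gt hR)).1 hfR_int
  refine ⟨hf_int, ?_⟩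
  -- the integral identity
  have hid := MeasureTheory.Measure.integral_comp_smul (volume : Measure E) f R
  rw [finrank_euclideanSpace_fin] at hid
  have hBpos : (0:ℝ) < R ^ n := pow_pos hR n
  have habs : |((R : ℝ) ^ n)⁻¹| = (R ^ n)⁻¹ := abs_of_pos (by positivity)
  rw [habs, smul_eq_mul] at hid
  have hint_eq : ∫ ξ, f ξ = R ^ n * ∫ η, f (R • η) := by
    rw [hid]; field_simp
  have hstep : ∫ η : E, f (R • η) ≤ max 1 A * ∫ ξ, g ξ := by
    rw [← integral_const_mul]
    refine integral_mono hfR_int (hg.const_mul _) fun η => ?_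
    rw [hkey η]
    exact hptw η
  -- powers of t
  have hRn : (R : ℝ) ^ n = t ^ (-((n : ℝ) / β)) := by
    rw [hRdef, ← Real.rpow_natCast (t ^ (-β⁻¹)) n, ← Real.rpow_mul ht0.le]
    congr 1
    field_simp
  have htmax : t ≤ max T 1 := le_trans htT (le_max_left _ _)
  have hmaxA : max 1 A ≤ (max T 1) ^ (2 * θ / β) * A := by
    have e1 : A ≤ (max T 1) ^ (2 * θ / β) * A := by
      nth_rewrite 1 [← one_mul A]
      exact mul_le_mul_of_nonneg_right
        (Real.one_le_rpow (le_max_right _ _) (by positivity)) hA.le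
    have e2 : (1:ℝ) ≤ (max T 1) ^ (2 * θ / β) * A := by
      have : t ^ (2 * θ / β) ≤ (max T 1) ^ (2 * θ / β) :=
        Real.rpow_le_rpow ht0.le htmax (by positivity)
      calc (1:ℝ) = t ^ (2 * θ / β) * A := by
            rw [hAdef, ← Real.rpow_add ht0]
            simp
        _ ≤ (max T 1) ^ (2 * θ / β) * A := mul_le_mul_of_nonneg_right this hA.le
    exact max_le e2 e1
  have hfinalc : R ^ n * max 1 A ≤
      (max T 1) ^ (2 * θ / β) * t ^ (-((2 * θ + n) / β)) := by
    calc R ^ n * max 1 A ≤ R ^ n * ((max T 1) ^ (2 * θ / β) * A) :=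
          mul_le_mul_of_nonneg_left hmaxA hBpos.le
      _ = (max T 1) ^ (2 * θ / β) * (t ^ (-((n : ℝ) / β)) * A) := by rw [hRn]; ring
      _ = (max T 1) ^ (2 * θ / β) * t ^ (-((2 * θ + n) / β)) := by
          rw [hAdef, ← Real.rpow_add ht0]
          congr 2
          field_simp
          ring
  calc ∫ ξ, f ξ = R ^ n * ∫ η, f (R • η) := hint_eq
    _ ≤ R ^ n * (max 1 A * ∫ ξ, g ξ) := by
        refine mul_le_mul_of_nonneg_left hstep hBpos.le
    _ = (R ^ n * max 1 A) * ∫ ξ, g ξ := by ring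
    _ ≤ ((max T 1) ^ (2 * θ / β) * t ^ (-((2 * θ + n) / β))) * ((∫ ξ, g ξ) + 1) := by
        refine mul_le_mul hfinalc (by linarith) hgnn ?_
        positivity
    _ = (max T 1) ^ (2 * θ / β) * ((∫ ξ, g ξ) + 1) * t ^ (-((2 * θ + n) / β)) := by ring

lemma rpow_one_add_le {z θ : ℝ} (hz : 0 ≤ z) (hθ0 : 0 ≤ θ) (hθ1 : θ ≤ 1) :
    (1 + z) ^ θ ≤ 1 + z ^ θ := by
  have h := NNReal.rpow_add_le_add_rpow (1 : ℝ≥0) z.toNNReal hθ0 hθ1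
  have h' := NNReal.coe_le_coe.2 h
  push_cast [NNReal.coe_rpow] at h'
  rwa [Real.coe_toNNReal _ hz, Real.one_rpow] at h'

lemma exp_sub_one_bound {ε θ : ℝ} (hε : 0 < ε) (hθ0 : 0 < θ) (hθ1 : θ ≤ 1) (z : ℂ)
    (hz : 0 ≤ z.re) :
    ‖Complex.exp (-(ε : ℂ) * z) - 1‖ ≤ 2 * (ε * ‖z‖) ^ θ := by
  have habs : ‖(-(ε : ℂ) * z)‖ = ε * ‖z‖ := by
    rw [norm_mul]
    simp [abs_of_pos hε]
  have hy : 0 ≤ ε * ‖z‖ := by positivity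
  have hmin : ‖Complex.exp (-(ε : ℂ) * z) - 1‖ ≤ 2 * min 1 (ε * ‖z‖) := by
    rcases le_total (ε * ‖z‖) 1 with h | h
    · rw [min_eq_right h]
      have := Complex.norm_exp_sub_one_le (x := -(ε : ℂ) * z) (by rw [habs]; exact h)
      rw [← habs]
      exact_mod_cast this
    · rw [min_eq_left h]
      have h1 : ‖Complex.exp (-(ε : ℂ) * z)‖ ≤ 1 := by
        rw [Complex.norm_exp]
        apply Real.exp_le_one_iff.2
        simp only [neg_mul, Complex.neg_re, Complex.mul_re, Complex.ofReal_re,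
          Complex.ofReal_im]
        nlinarith
      calc ‖Complex.exp (-(ε : ℂ) * z) - 1‖ ≤ ‖Complex.exp (-(ε : ℂ) * z)‖ + ‖(1 : ℂ)‖ :=
            norm_sub_le _ _
        _ ≤ 2 * 1 := by rw [norm_one]; linarith
  refine hmin.trans ?_
  have : min 1 (ε * ‖z‖) ≤ (ε * ‖z‖) ^ θ := by
    rcases eq_or_lt_of_le hy with h0 | h0
    · rw [← h0, Real.zero_rpow (ne_of_gt hθ0)]
      simp
    rcases le_total (ε * ‖z‖) 1 with h | h
    · rw [min_eq_right h]
      calc ε * ‖z‖ = (ε * ‖z‖) ^ (1 : ℝ) := (Real.rpow_one _).symm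
        _ ≤ (ε * ‖z‖) ^ θ := Real.rpow_le_rpow_of_exponent_ge h0 h hθ1
    · rw [min_eq_left h]
      exact Real.one_le_rpow h (le_of_lt hθ0)
  linarith

/-- The transition density `p_t(x) = (2π)^{-n} ∫ e^{-tΨ(ξ)} e^{-i⟨x,ξ⟩} dξ`. -/
def transDensity (n : ℕ) (Ψ : EuclideanSpace ℝ (Fin n) → ℂ) (t : ℝ)
    (x : EuclideanSpace ℝ (Fin n)) : ℂ :=
  (((2 * Real.pi) ^ n)⁻¹ : ℝ) *
    ∫ ξ : EuclideanSpace ℝ (Fin n),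
      Complex.exp (-(t : ℂ) * Ψ ξ) * Complex.exp (-(Complex.I * ((inner ℝ x ξ : ℝ) : ℂ)))

theorem stmt4 (n : ℕ) (Ψ : EuclideanSpace ℝ (Fin n) → ℂ) (hΨcont : Continuous Ψ)
    (hΨre : ∀ ξ, 0 ≤ (Ψ ξ).re) (M β : ℝ) (hM : 0 < M) (hβ : β ∈ Set.Ioc (0 : ℝ) 2)
    (hgrowth : ∀ ξ : EuclideanSpace ℝ (Fin n), M < ‖ξ‖ → ‖ξ‖ ^ β ≤ (Ψ ξ).re)
    (hΨgrowth : ∃ L : ℝ, ∀ ξ, ‖Ψ ξ‖ ≤ L * (1 + ‖ξ‖ ^ 2))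
    (θ : ℝ) (hθ : θ ∈ Set.Ioc (0 : ℝ) 1) (T : ℝ) (hT : 0 < T) :
    ∃ C : ℝ, 0 < C ∧ ∀ t ∈ Set.Ioc (0 : ℝ) T, ∀ ε : ℝ, 0 < ε →
      ∀ x : EuclideanSpace ℝ (Fin n),
        ‖transDensity n Ψ (t + ε) x - transDensity n Ψ t x‖ ≤
          C * ε ^ θ * t ^ (-((2 * θ + n) / β)) := by
  obtain ⟨hβ0, hβ2⟩ := hβ
  obtain ⟨hθ0, hθ1⟩ := hθ
  obtain ⟨L₀, hL₀⟩ := hΨgrowth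
  set L := max L₀ 1 with hLdef
  have hL1 : (1 : ℝ) ≤ L := le_max_right _ _
  have hLpos : (0 : ℝ) < L := lt_of_lt_of_le one_pos hL1
  have hL : ∀ ξ : EuclideanSpace ℝ (Fin n), ‖Ψ ξ‖ ≤ L * (1 + ‖ξ‖ ^ 2) := by
    intro ξ
    refine (hL₀ ξ).trans ?_
    have h1 : L₀ ≤ L := le_max_left _ _
    nlinarith [sq_nonneg ‖ξ‖]
  obtain ⟨K, hK, hKt⟩ := aux3 n β θ T hβ0 hθ0 hT
  set a := (2 * θ + (n : ℝ)) / β with hadef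
  have ha0 : 0 ≤ a := by positivity
  set V := (volume (Metric.closedBall (0 : EuclideanSpace ℝ (Fin n)) M)).toReal with hVdef
  have hV : 0 ≤ V := ENNReal.toReal_nonneg
  have hLθ : (0 : ℝ) < L ^ θ := Real.rpow_pos_of_pos hLpos θ
  have hM2θ : (0 : ℝ) ≤ M ^ (2 * θ) := Real.rpow_nonneg hM.le _
  have hTm : (0 : ℝ) ≤ (max T 1) ^ a := Real.rpow_nonneg (by positivity) _
  have hCpos : 0 < 2 * L ^ θ * ((1 + M ^ (2 * θ)) * V * (max T 1) ^ a + K) := by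
    have hX : (0:ℝ) ≤ (1 + M ^ (2 * θ)) * V * (max T 1) ^ a := by positivity
    have := add_pos_of_nonneg_of_pos hX hK
    positivity
  refine ⟨2 * L ^ θ * ((1 + M ^ (2 * θ)) * V * (max T 1) ^ a + K), hCpos, ?_⟩
  rintro t ⟨ht0, htT⟩ ε hε x
  -- the integrand family
  set F : ℝ → EuclideanSpace ℝ (Fin n) → ℂ := fun s ξ =>
    Complex.exp (-(s : ℂ) * Ψ ξ) * Complex.exp (-(Complex.I * ((inner ℝ x ξ : ℝ) : ℂ)))
    with hF
  have hnormF : ∀ (s : ℝ) (ξ : EuclideanSpace ℝ (Fin n)), ‖F s ξ‖ = Real.exp (-(s * (Ψ ξ).re)) := by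
    intro s ξ
    rw [hF]
    simp only [norm_mul, Complex.norm_exp]
    simp [Complex.mul_re]
  have hcontF : ∀ s : ℝ, Continuous (F s) := by
    intro s
    have hinner : Continuous fun ξ : EuclideanSpace ℝ (Fin n) => (inner ℝ x ξ : ℝ) :=
      Continuous.inner continuous_const continuous_id
    exact (Complex.continuous_exp.comp (continuous_const.mul hΨcont)).mul
      (Complex.continuous_exp.comp
        ((continuous_const.mul (Complex.continuous_ofReal.comp hinner)).neg))
  obtain ⟨hft_int, hft_bound⟩ := hKt t ⟨ht0, htT⟩
  -- majorant
  set H : EuclideanSpace ℝ (Fin n) → ℝ := fun ξ =>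
    (Metric.closedBall (0 : EuclideanSpace ℝ (Fin n)) M).indicator (fun _ => 1 + M ^ (2 * θ)) ξ +
      Real.exp (-(t * ‖ξ‖ ^ β)) * (1 + ‖ξ‖ ^ (2 * θ)) with hH
  have hH_int : Integrable H := by
    refine Integrable.add ?_ hft_int
    rw [integrable_indicator_iff measurableSet_closedBall]
    exact (integrableOn_const_iff (C := 1 + M ^ (2 * θ))).2 (Or.inr measure_closedBall_lt_top)
  have hHbd : ∀ s : ℝ, t ≤ s → ∀ ξ : EuclideanSpace ℝ (Fin n),
      Real.exp (-(s * (Ψ ξ).re)) * (1 + ‖ξ‖ ^ (2 * θ)) ≤ H ξ := by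
    intro s hs ξ
    have h2θ : (0 : ℝ) ≤ ‖ξ‖ ^ (2 * θ) := Real.rpow_nonneg (norm_nonneg _) _
    have hexp2 : (0:ℝ) ≤ Real.exp (-(t * ‖ξ‖ ^ β)) * (1 + ‖ξ‖ ^ (2 * θ)) := by positivity
    rcases le_or_gt ‖ξ‖ M with h | h
    · have e1 : Real.exp (-(s * (Ψ ξ).re)) ≤ 1 :=
        Real.exp_le_one_iff.2 (neg_nonpos.2 (mul_nonneg (le_trans ht0.le hs) (hΨre ξ)))
      have e2 : ‖ξ‖ ^ (2 * θ) ≤ M ^ (2 * θ) :=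
        Real.rpow_le_rpow (norm_nonneg _) h (by positivity)
      have e3 : (Metric.closedBall (0 : EuclideanSpace ℝ (Fin n)) M).indicator
          (fun _ => 1 + M ^ (2 * θ)) ξ = 1 + M ^ (2 * θ) :=
        Set.indicator_of_mem (mem_closedBall_zero_iff.2 h) _
      rw [hH]
      simp only [e3]
      nlinarith [Real.exp_pos (-(s * (Ψ ξ).re))]
    · have e1 : Real.exp (-(s * (Ψ ξ).re)) ≤ Real.exp (-(t * ‖ξ‖ ^ β)) := by
        apply Real.exp_le_exp.2
        have h1 := hgrowth ξ h
        have h2 := hΨre ξ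
        nlinarith
      have e3 : (Metric.closedBall (0 : EuclideanSpace ℝ (Fin n)) M).indicator
          (fun _ => 1 + M ^ (2 * θ)) ξ = 0 :=
        Set.indicator_of_notMem (by
          rw [mem_closedBall_zero_iff]; exact not_le.2 h) _
      rw [hH]
      simp only [e3, zero_add]
      exact mul_le_mul_of_nonneg_right e1 (by positivity)
  have hFint : ∀ s : ℝ, t ≤ s → Integrable (F s) := by
    intro s hs
    refine hH_int.mono' (hcontF s).aestronglyMeasurable ?_
    filter_upwards with ξ
    rw [hnormF]
    calc Real.exp (-(s * (Ψ ξ).re))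
        ≤ Real.exp (-(s * (Ψ ξ).re)) * (1 + ‖ξ‖ ^ (2 * θ)) := by
          refine le_mul_of_one_le_right (Real.exp_pos _).le ?_
          have : (0:ℝ) ≤ ‖ξ‖ ^ (2 * θ) := Real.rpow_nonneg (norm_nonneg _) _
          linarith
      _ ≤ H ξ := hHbd s hs ξ
  have hFt := hFint t le_rfl
  have hFtε := hFint (t + ε) (by linarith)
  -- pointwise bound on the difference
  have hptw : ∀ ξ : EuclideanSpace ℝ (Fin n), ‖F (t + ε) ξ - F t ξ‖ ≤
      2 * L ^ θ * ε ^ θ * (Real.exp (-(t * (Ψ ξ).re)) * (1 + ‖ξ‖ ^ (2 * θ))) := by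
    intro ξ
    have hsplit : F (t + ε) ξ - F t ξ = (Complex.exp (-(ε : ℂ) * Ψ ξ) - 1) * F t ξ := by
      rw [hF]
      simp only
      have h1 : (-(((t + ε : ℝ)) : ℂ) * Ψ ξ) = (-(ε : ℂ) * Ψ ξ) + (-(t : ℂ) * Ψ ξ) := by
        push_cast; ring
      rw [h1, Complex.exp_add]
      ring
    rw [hsplit, norm_mul, hnormF]
    have h1 : ‖Complex.exp (-(ε : ℂ) * Ψ ξ) - 1‖ ≤ 2 * (ε * ‖Ψ ξ‖) ^ θ :=
      exp_sub_one_bound hε hθ0 hθ1 _ (hΨre ξ)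
    have h2 : (ε * ‖Ψ ξ‖) ^ θ ≤ ε ^ θ * (L ^ θ * (1 + ‖ξ‖ ^ (2 * θ))) := by
      rw [Real.mul_rpow hε.le (norm_nonneg _)]
      refine mul_le_mul_of_nonneg_left ?_ (Real.rpow_nonneg hε.le θ)
      calc ‖Ψ ξ‖ ^ θ ≤ (L * (1 + ‖ξ‖ ^ 2)) ^ θ :=
            Real.rpow_le_rpow (norm_nonneg _) (hL ξ) hθ0.le
        _ = L ^ θ * (1 + ‖ξ‖ ^ 2) ^ θ := Real.mul_rpow hLpos.le (by positivity)
        _ ≤ L ^ θ * (1 + ‖ξ‖ ^ (2 * θ)) := by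
            refine mul_le_mul_of_nonneg_left ?_ (Real.rpow_nonneg hLpos.le _)
            have hr := rpow_one_add_le (z := ‖ξ‖ ^ 2) (sq_nonneg _) hθ0.le hθ1
            have hsq : ((‖ξ‖ : ℝ) ^ 2) ^ θ = ‖ξ‖ ^ (2 * θ) := by
              rw [← Real.rpow_natCast ‖ξ‖ 2, ← Real.rpow_mul (norm_nonneg _)]
              norm_num
            rw [hsq] at hr
            exact hr
    have hexp := (Real.exp_pos (-(t * (Ψ ξ).re))).le
    have h2θ : (0 : ℝ) ≤ 1 + ‖ξ‖ ^ (2 * θ) := by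
      have : (0:ℝ) ≤ ‖ξ‖ ^ (2 * θ) := Real.rpow_nonneg (norm_nonneg _) _
      linarith
    calc ‖Complex.exp (-(ε : ℂ) * Ψ ξ) - 1‖ * Real.exp (-(t * (Ψ ξ).re))
        ≤ (2 * (ε ^ θ * (L ^ θ * (1 + ‖ξ‖ ^ (2 * θ))))) * Real.exp (-(t * (Ψ ξ).re)) := by
          refine mul_le_mul_of_nonneg_right (h1.trans ?_) hexp
          nlinarith
      _ = 2 * L ^ θ * ε ^ θ * (Real.exp (-(t * (Ψ ξ).re)) * (1 + ‖ξ‖ ^ (2 * θ))) := by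
          ring
  -- assemble
  have habs : ‖transDensity n Ψ (t + ε) x - transDensity n Ψ t x‖ =
      ((2 * Real.pi) ^ n)⁻¹ * ‖∫ ξ : EuclideanSpace ℝ (Fin n), (F (t + ε) ξ - F t ξ)‖ := by
    rw [transDensity, transDensity, ← mul_sub, norm_mul,
      ← integral_sub hFtε hFt]
    congr 1
    rw [Complex.norm_real, Real.norm_eq_abs]
    exact abs_of_nonneg (by positivity)
  rw [habs]
  have hπ : ((2 * Real.pi) ^ n : ℝ)⁻¹ ≤ 1 := by
    rw [inv_le_one_iff₀]
    right
    apply one_le_pow₀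
    nlinarith [Real.pi_gt_three]
  have hnorm_int : ‖∫ ξ : EuclideanSpace ℝ (Fin n), (F (t + ε) ξ - F t ξ)‖ ≤
      ∫ ξ : EuclideanSpace ℝ (Fin n), (2 * L ^ θ * ε ^ θ) * H ξ := by
    refine norm_integral_le_of_norm_le (hH_int.const_mul _) ?_
    filter_upwards with ξ
    refine (hptw ξ).trans ?_
    exact mul_le_mul_of_nonneg_left (hHbd t le_rfl ξ) (by positivity)
  have hintH : ∫ ξ : EuclideanSpace ℝ (Fin n), (2 * L ^ θ * ε ^ θ) * H ξ =
      (2 * L ^ θ * ε ^ θ) * ((1 + M ^ (2 * θ)) * V +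
        ∫ ξ : EuclideanSpace ℝ (Fin n), Real.exp (-(t * ‖ξ‖ ^ β)) * (1 + ‖ξ‖ ^ (2 * θ))) := by
    rw [integral_const_mul]
    congr 1
    rw [hH]
    rw [integral_add ?_ hft_int]
    · congr 1
      rw [integral_indicator_const _ measurableSet_closedBall, smul_eq_mul, hVdef, measureReal_def]
      ring
    · rw [integrable_indicator_iff measurableSet_closedBall]
      exact (integrableOn_const_iff (C := 1 + M ^ (2 * θ))).2 (Or.inr measure_closedBall_lt_top)
  have hone : (1 : ℝ) ≤ (max T 1) ^ a * t ^ (-a) := by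
    have h1 : t ^ a ≤ (max T 1) ^ a :=
      Real.rpow_le_rpow ht0.le (htT.trans (le_max_left _ _)) ha0
    have h2 : t ^ a * t ^ (-a) = 1 := by
      rw [← Real.rpow_add ht0]
      simp
    have h3 : (0:ℝ) < t ^ (-a) := Real.rpow_pos_of_pos ht0 _
    calc (1:ℝ) = t ^ a * t ^ (-a) := h2.symm
      _ ≤ (max T 1) ^ a * t ^ (-a) := mul_le_mul_of_nonneg_right h1 h3.le
  have hta : (0:ℝ) < t ^ (-a) := Real.rpow_pos_of_pos ht0 _
  have hεθ : (0:ℝ) < ε ^ θ := Real.rpow_pos_of_pos hε _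
  calc ((2 * Real.pi) ^ n)⁻¹ * ‖∫ ξ : EuclideanSpace ℝ (Fin n), (F (t + ε) ξ - F t ξ)‖
      ≤ 1 * (∫ ξ : EuclideanSpace ℝ (Fin n), (2 * L ^ θ * ε ^ θ) * H ξ) := by
        refine mul_le_mul hπ hnorm_int (norm_nonneg _) one_pos.le
    _ = (2 * L ^ θ * ε ^ θ) * ((1 + M ^ (2 * θ)) * V +
          ∫ ξ : EuclideanSpace ℝ (Fin n), Real.exp (-(t * ‖ξ‖ ^ β)) * (1 + ‖ξ‖ ^ (2 * θ))) := by
        rw [one_mul, hintH]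
    _ ≤ (2 * L ^ θ * ε ^ θ) * ((1 + M ^ (2 * θ)) * V * ((max T 1) ^ a * t ^ (-a)) +
          K * t ^ (-a)) := by
        refine mul_le_mul_of_nonneg_left ?_ (by positivity)
        have hb1 : (1 + M ^ (2 * θ)) * V ≤ (1 + M ^ (2 * θ)) * V * ((max T 1) ^ a * t ^ (-a)) := by
          nth_rewrite 1 [← mul_one ((1 + M ^ (2 * θ)) * V)]
          refine mul_le_mul_of_nonneg_left hone (by positivity)
        have hb2 := hft_bound
        rw [hadef] at *
        linarith
    _ = 2 * L ^ θ * ((1 + M ^ (2 * θ)) * V * (max T 1) ^ a + K) * ε ^ θ * t ^ (-a) := by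
        ring
    _ = 2 * L ^ θ * ((1 + M ^ (2 * θ)) * V * (max T 1) ^ a + K) * ε ^ θ *
          t ^ (-((2 * θ + n) / β)) := by rw [hadef]
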